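/- Let n ≥ 1, let Φ ∈ ℝ^{n×n} be symmetric, and let γ ≠ 0. Define the 2n×2n block matrices M := [[0, Φ],[−I, γI]], P⁽²⁾ := [[0,0],[0,I]], and Q := (2γ)^{−1}[[Φ, 0],[0, I]]. Then M Q + Q Mᵀ = P⁽²⁾. Moreover, if Φ is positive definite and γ > 0, then Q = ∫₀^∞ e^{−tM} P⁽²⁾ e^{−tMᵀ} dt; consequently, for every X ∈ ℝ^{2n}, ∫₀^∞ |(e^{−tMᵀ}X)₂|² dt = (1/γ) H(X), where (·)₂ denotes the second (momentum) block of the vector and H(X) := (1/2)(X₂ᵀX₂ + X₁ᵀΦX₁). -/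

import Mathlib

open Real MeasureTheory Matrix
open scoped BigOperators
open Filter

noncomputable section

/-- The block matrix `M = [[0, Φ],[−I, γI]]` on `ℝ^n ⊕ ℝ^n`. -/
def Mblk (n : ℕ) (Φ : Matrix (Fin n) (Fin n) ℝ) (γ : ℝ) :
    Matrix (Fin 2 × Fin n) (Fin 2 × Fin n) ℝ :=
  fun p q =>
    if p.1 = 0 then (if q.1 = 0 then 0 else Φ p.2 q.2)
    else (if q.1 = 0 then -(if p.2 = q.2 then 1 else 0)
          else γ * (if p.2 = q.2 then 1 else 0))

/-- The block matrix `P⁽²⁾ = [[0,0],[0,I]]`. -/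
def Pblk (n : ℕ) : Matrix (Fin 2 × Fin n) (Fin 2 × Fin n) ℝ :=
  fun p q => if p.1 = 1 ∧ q.1 = 1 ∧ p.2 = q.2 then 1 else 0

/-- The block matrix `Q = (2γ)⁻¹ [[Φ,0],[0,I]]`. -/
def Qblk (n : ℕ) (Φ : Matrix (Fin n) (Fin n) ℝ) (γ : ℝ) :
    Matrix (Fin 2 × Fin n) (Fin 2 × Fin n) ℝ :=
  fun p q => (2 * γ)⁻¹ *
    (if p.1 = 0 then (if q.1 = 0 then Φ p.2 q.2 else 0)
     else (if q.1 = 0 then 0 else (if p.2 = q.2 then 1 else 0)))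

set_option linter.unusedSectionVars false


variable {ι : Type*} [Fintype ι] [DecidableEq ι]

attribute [local instance] Matrix.linftyOpNormedRing Matrix.linftyOpNormedAlgebra

example : CompleteSpace (Matrix ι ι ℝ) := by infer_instance
example : FiniteDimensional ℝ (Matrix ι ι ℝ) := by infer_instance

/-- entry of mulVec as a continuous linear map in the matrix -/
def mvCLM (X : ι → ℝ) (c : ι) : Matrix ι ι ℝ →L[ℝ] ℝ :=
  LinearMap.toContinuousLinearMap
    { toFun := fun M => M.mulVec X c
      map_add' := by intro M N; simp [Matrix.add_mulVec]
      map_smul' := by intro s M; simp [Matrix.smul_mulVec] }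

@[simp] lemma mvCLM_apply (X : ι → ℝ) (c : ι) (M : Matrix ι ι ℝ) :
    mvCLM X c M = M.mulVec X c := rfl

def entCLM (p q : ι) : Matrix ι ι ℝ →L[ℝ] ℝ :=
  LinearMap.toContinuousLinearMap
    { toFun := fun M => M p q
      map_add' := by intro M N; simp
      map_smul' := by intro s M; simp }

@[simp] lemma entCLM_apply (p q : ι) (M : Matrix ι ι ℝ) : entCLM p q M = M p q := rfl

lemma hasDerivAt_expM (B : Matrix ι ι ℝ) (t : ℝ) :
    HasDerivAt (fun t : ℝ => NormedSpace.exp ((-t) • B)) ((-1 : ℝ) • (B * NormedSpace.exp ((-t) • B))) t := by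
  have h1 : HasDerivAt (fun u : ℝ => NormedSpace.exp (u • B)) (B * NormedSpace.exp ((-t) • B)) (-t) :=
    hasDerivAt_exp_smul_const' B (-t)
  have h2 : HasDerivAt (fun u : ℝ => -u) (-1 : ℝ) t := (hasDerivAt_id t).neg
  have h3 := h1.scomp t h2
  simp only [Function.comp_def] at h3
  exact h3

lemma hasDerivAt_Y (B : Matrix ι ι ℝ) (X : ι → ℝ) (c : ι) (t : ℝ) :
    HasDerivAt (fun t : ℝ => (NormedSpace.exp ((-t) • B)).mulVec X c)
      (-(B.mulVec ((NormedSpace.exp ((-t) • B)).mulVec X) c)) t := by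
  have h := ((mvCLM X c).hasFDerivAt.comp_hasDerivAt t (hasDerivAt_expM B t))
  simp only [Function.comp_def, mvCLM_apply] at h
  refine h.congr_deriv (Eq.symm ?_); change _ = ((-1 : ℝ) • (B * NormedSpace.exp ((-t) • B))).mulVec X c; simp [← Matrix.mulVec_mulVec, Matrix.neg_mulVec]

lemma continuous_expM (B : Matrix ι ι ℝ) :
    Continuous (fun t : ℝ => NormedSpace.exp ((-t) • B)) := by
  have : ∀ t : ℝ, ContinuousAt (fun t : ℝ => NormedSpace.exp ((-t) • B)) t :=
    fun t => (hasDerivAt_expM B t).continuousAt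
  exact continuous_iff_continuousAt.2 this

lemma commute_exp (B : Matrix ι ι ℝ) (t : ℝ) :
    B * NormedSpace.exp ((-t) • B) = NormedSpace.exp ((-t) • B) * B := by
  have h : Commute B ((-t) • B) := (Commute.refl B).smul_right (-t)
  exact (h.exp_right)

lemma hasDerivAt_F (A Q : Matrix ι ι ℝ) (t : ℝ) :
    HasDerivAt (fun t : ℝ => NormedSpace.exp ((-t) • A) * Q * NormedSpace.exp ((-t) • Aᵀ))
      (-(NormedSpace.exp ((-t) • A) * (A * Q + Q * Aᵀ) * NormedSpace.exp ((-t) • Aᵀ))) t := by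
  have h1 := (hasDerivAt_expM A t).mul_const Q
  have h2 := h1.mul (hasDerivAt_expM Aᵀ t)
  refine h2.congr_deriv (Eq.symm ?_)
  have e1 : (-1:ℝ) • (A * NormedSpace.exp ((-t) • A)) * Q * NormedSpace.exp ((-t) • Aᵀ)
      = -(NormedSpace.exp ((-t) • A) * A * Q * NormedSpace.exp ((-t) • Aᵀ)) := by
    rw [show A * NormedSpace.exp ((-t) • A) = NormedSpace.exp ((-t) • A) * A from commute_exp A t]
    simp [smul_mul_assoc]
  have e2 : NormedSpace.exp ((-t) • A) * Q * ((-1:ℝ) • (Aᵀ * NormedSpace.exp ((-t) • Aᵀ)))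
      = -(NormedSpace.exp ((-t) • A) * Q * (Aᵀ * NormedSpace.exp ((-t) • Aᵀ))) := by
    simp [mul_smul_comm]
  calc -(NormedSpace.exp ((-t) • A) * (A * Q + Q * Aᵀ) * NormedSpace.exp ((-t) • Aᵀ))
      = -(NormedSpace.exp ((-t) • A) * A * Q * NormedSpace.exp ((-t) • Aᵀ))
        + -(NormedSpace.exp ((-t) • A) * Q * (Aᵀ * NormedSpace.exp ((-t) • Aᵀ))) := by noncomm_ring
    _ = _ := by rw [← e1, ← e2]


lemma mulVecAT0 {n : ℕ} (Φ : Matrix (Fin n) (Fin n) ℝ) (γ : ℝ) (v : Fin 2 × Fin n → ℝ)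
    (j : Fin n) : (Mblk n Φ γ)ᵀ.mulVec v (0, j) = -v (1, j) := by
  simp only [Matrix.mulVec, dotProduct, Fintype.sum_prod_type, Fin.sum_univ_two,
    Matrix.transpose_apply, Mblk]
  simp [Finset.sum_ite_eq, Finset.sum_ite_eq']

lemma mulVecAT1 {n : ℕ} (Φ : Matrix (Fin n) (Fin n) ℝ) (γ : ℝ) (v : Fin 2 × Fin n → ℝ)
    (j : Fin n) :
    (Mblk n Φ γ)ᵀ.mulVec v (1, j) = (∑ k, Φ k j * v (0, k)) + γ * v (1, j) := by
  simp only [Matrix.mulVec, dotProduct, Fintype.sum_prod_type, Fin.sum_univ_two,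
    Matrix.transpose_apply, Mblk]
  simp [Finset.sum_ite_eq, Finset.sum_ite_eq', mul_comm]


-- ε = γ / (γ^2/m + 4); encoded via hε1, hε2.
lemma eps_props {m γ : ℝ} (hm : 0 < m) (hγ : 0 < γ) :
    ∃ ε : ℝ, 0 < ε ∧ ε * γ^2 + 4*ε*m = γ*m := by
  refine ⟨γ*m / (γ^2 + 4*m), by positivity, ?_⟩
  field_simp

lemma cr_bound {Np Nq Cr a b : ℝ} (hNp : 0 ≤ Np) (hNq : 0 ≤ Nq) (ha : 0 < a) (hb : 0 < b)
    (hab : Np * Nq ≤ (a*Np) * (b*Nq) ) (hCS : Cr^2 ≤ Np * Nq) :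
    -(a*Np + b*Nq) ≤ 2*Cr ∧ 2*Cr ≤ a*Np + b*Nq := by
  have hS0 : 0 ≤ a*Np + b*Nq := by positivity
  have hS2 : (2*Cr)^2 ≤ (a*Np+b*Nq)^2 := by nlinarith [sq_nonneg (a*Np - b*Nq)]
  have habs : |2*Cr| ≤ |a*Np+b*Nq| := by
    rw [← Real.sqrt_sq_eq_abs, ← Real.sqrt_sq_eq_abs]
    exact Real.sqrt_le_sqrt hS2
  rw [abs_of_nonneg hS0] at habs
  exact ⟨neg_le_of_abs_le habs, le_of_abs_le habs⟩

-- derivative inequality: G' + ε G ≤ 0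
lemma key_ineq {m γ ε Np Nq EΦ Cr : ℝ} (hm : 0 < m) (hγ : 0 < γ)
    (hε : 0 < ε) (hε1 : ε * γ^2 + 4*ε*m = γ*m)
    (hNp : 0 ≤ Np) (hNq : 0 ≤ Nq) (hEΦ : m * Nq ≤ EΦ)
    (hCS : Cr^2 ≤ Np * Nq) :
    -γ*Np + ε*(Np - EΦ - γ*Cr) + ε*(Np/2 + EΦ/2 + ε*Cr) ≤ 0 := by
  have hεγ : ε ≤ γ/4 := by nlinarith
  have hεm : ε * γ ≤ m := by nlinarith
  have h1 : Np * Nq ≤ ((γ/m)*Np) * ((m/γ)*Nq) := by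
    rw [show ((γ/m)*Np) * ((m/γ)*Nq) = (γ/m)*(m/γ)*(Np*Nq) by ring]
    rw [show γ/m*(m/γ) = 1 by field_simp]
    nlinarith
  obtain ⟨hc1, hc2⟩ := cr_bound hNp hNq (by positivity) (by positivity) h1 hCS
  -- goal: -(γ - 3ε/2) Np - (ε/2) EΦ - ε(γ-ε) Cr ≤ 0
  have hγε : 0 ≤ γ - ε := by nlinarith
  -- ε(γ-ε) * (-Cr) ≤ ε(γ-ε)*(aNp+bNq)/2 ≤ εγ/2*(...)
  have h2 : -(ε*(γ-ε)*Cr) ≤ ε*γ/2 * ((γ/m)*Np + (m/γ)*Nq) := by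
    nlinarith [mul_nonneg (mul_nonneg hε.le hγε) (by positivity : (0:ℝ) ≤ (γ/m)*Np + (m/γ)*Nq),
      mul_le_mul_of_nonneg_left hc1 (mul_nonneg hε.le hγε)]
  have h3 : ε*γ/2*((γ/m)*Np) = ε*γ^2/(2*m)*Np := by field_simp
  have h4 : ε*γ/2*((m/γ)*Nq) = ε*m/2*Nq := by field_simp
  have h5 : ε*γ^2 = γ*m - 4*ε*m := by linarith
  have h6 : ε*γ^2/(2*m)*Np = (γ - 4*ε)/2 * Np := by
    rw [h5]; field_simp
  nlinarith [mul_le_mul_of_nonneg_left hEΦ (by positivity : (0:ℝ) ≤ ε/2)]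

lemma lower_ineq {m γ ε Np Nq EΦ Cr : ℝ} (hm : 0 < m) (hγ : 0 < γ)
    (hε : 0 < ε) (hε1 : ε * γ^2 + 4*ε*m = γ*m)
    (hNp : 0 ≤ Np) (hNq : 0 ≤ Nq) (hEΦ : m * Nq ≤ EΦ)
    (hCS : Cr^2 ≤ Np * Nq) :
    Np/4 + m/4*Nq ≤ Np/2 + EΦ/2 + ε*Cr := by
  have hεγ : ε ≤ γ/4 := by nlinarith
  have hεm : ε * γ ≤ m := by nlinarith
  have hε2 : ε^2 ≤ m/4 := by nlinarith
  -- need ε*Cr ≥ -(Np/4 + ε^2 Nq):  (ε Cr)^2 ≤ ε² Np Nq ≤ (Np/4 + ε²Nq)² /(4*(1/4)) etc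
  have h1 : Np * Nq ≤ ((1/(2*ε))*Np) * ((2*ε)*Nq) := by
    rw [show ((1/(2*ε))*Np) * ((2*ε)*Nq) = ((1/(2*ε))*(2*ε))*(Np*Nq) by ring]
    rw [show (1/(2*ε))*(2*ε) = 1 by field_simp]
    nlinarith
  obtain ⟨hc1, hc2⟩ := cr_bound hNp hNq (by positivity) (by positivity) h1 hCS
  have h2 : -(ε*Cr) ≤ ε/2 * ((1/(2*ε))*Np + (2*ε)*Nq) := by nlinarith
  have h3 : ε/2*((1/(2*ε))*Np) = Np/4 := by field_simp; ring
  nlinarith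


lemma quad_eq_dot {n : ℕ} (Φ : Matrix (Fin n) (Fin n) ℝ) (v : Fin n → ℝ) :
    dotProduct v (Φ *ᵥ v) = ∑ j, ∑ k, v j * Φ j k * v k := by
  simp only [dotProduct, Matrix.mulVec, dotProduct, Finset.mul_sum]
  exact Finset.sum_congr rfl fun j _ => Finset.sum_congr rfl fun k _ => by ring

lemma posdef_bound {n : ℕ} (hn : 1 ≤ n) (Φ : Matrix (Fin n) (Fin n) ℝ) (hpd : Φ.PosDef) :
    ∃ m : ℝ, 0 < m ∧ ∀ v : Fin n → ℝ, m * ∑ j, v j ^ 2 ≤ ∑ j, ∑ k, v j * Φ j k * v k := by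
  haveI : Nonempty (Fin n) := ⟨⟨0, hn⟩⟩
  have hpos : ∀ v : Fin n → ℝ, v ≠ 0 → 0 < ∑ j, ∑ k, v j * Φ j k * v k := by
    intro v hv
    have := hpd.dotProduct_mulVec_pos hv
    rwa [star_trivial, quad_eq_dot] at this
  set f : (Fin n → ℝ) → ℝ := fun v => ∑ j, ∑ k, v j * Φ j k * v k with hf
  have hcont : Continuous f := by
    apply continuous_finset_sum; intro j _
    apply continuous_finset_sum; intro k _
    exact ((continuous_apply j).mul continuous_const).mul (continuous_apply k)
  have hsph : IsCompact (Metric.sphere (0 : Fin n → ℝ) 1) := isCompact_sphere 0 1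
  have hne : (Metric.sphere (0 : Fin n → ℝ) 1).Nonempty :=
    NormedSpace.sphere_nonempty.2 zero_le_one
  obtain ⟨v₀, hv₀s, hv₀min⟩ := hsph.exists_isMinOn hne hcont.continuousOn
  have hv₀norm : ‖v₀‖ = 1 := by simpa using hv₀s
  have hv₀ne : v₀ ≠ 0 := by intro h; rw [h] at hv₀norm; simp at hv₀norm
  set m₀ := f v₀ with hm₀
  have hm₀pos : 0 < m₀ := hpos v₀ hv₀ne
  refine ⟨m₀ / n, by positivity, ?_⟩
  intro v
  rcases eq_or_ne v 0 with rfl | hv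
  · simp [f]
  · have hnv : 0 < ‖v‖ := norm_pos_iff.2 hv
    set w : Fin n → ℝ := ‖v‖⁻¹ • v with hw
    have hws : w ∈ Metric.sphere (0 : Fin n → ℝ) 1 := by
      simp [hw, norm_smul, abs_of_nonneg (inv_nonneg.2 hnv.le), inv_mul_cancel₀ hnv.ne']
    have hfw : m₀ ≤ f w := hv₀min hws
    have hscale : f v = ‖v‖^2 * f w := by
      simp only [hf, hw, Pi.smul_apply, smul_eq_mul, Finset.mul_sum]
      refine Finset.sum_congr rfl fun j _ => Finset.sum_congr rfl fun k _ => ?_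
      field_simp
    have hcomp : ∑ j, v j ^ 2 ≤ n * ‖v‖^2 := by
      calc ∑ j, v j ^ 2 ≤ ∑ _j : Fin n, ‖v‖^2 := by
            apply Finset.sum_le_sum
            intro j _
            have := norm_le_pi_norm v j
            have h2 : |v j| ≤ ‖v‖ := by simpa using this
            nlinarith [abs_nonneg (v j), sq_abs (v j)]
        _ = n * ‖v‖^2 := by simp [Finset.sum_const, nsmul_eq_mul]
    have h1 : m₀ * ‖v‖^2 ≤ f v := by
      rw [hscale]; nlinarith
    have hn0 : (0:ℝ) < n := by exact_mod_cast hn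
    calc (m₀ / n) * ∑ j, v j ^ 2 ≤ (m₀/n) * (n * ‖v‖^2) := by
          apply mul_le_mul_of_nonneg_left hcomp (by positivity)
      _ = m₀ * ‖v‖^2 := by field_simp
      _ ≤ f v := h1


section evo

variable {n : ℕ} (Φ : Matrix (Fin n) (Fin n) ℝ) (γ : ℝ) (X : Fin 2 × Fin n → ℝ)

def Yf (t : ℝ) : Fin 2 × Fin n → ℝ := (NormedSpace.exp ((-t) • (Mblk n Φ γ)ᵀ)).mulVec X

def NpF (t : ℝ) : ℝ := ∑ j, Yf Φ γ X t (1, j) ^ 2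
def NqF (t : ℝ) : ℝ := ∑ j, Yf Φ γ X t (0, j) ^ 2
def EF (t : ℝ) : ℝ := ∑ j, ∑ k, Yf Φ γ X t (0, j) * Φ j k * Yf Φ γ X t (0, k)
def CrF (t : ℝ) : ℝ := ∑ j, Yf Φ γ X t (0, j) * Yf Φ γ X t (1, j)
def HF (t : ℝ) : ℝ := NpF Φ γ X t / 2 + EF Φ γ X t / 2

lemma hY0 (j : Fin n) (t : ℝ) :
    HasDerivAt (fun t => Yf Φ γ X t (0, j)) (Yf Φ γ X t (1, j)) t := by
  have h := hasDerivAt_Y ((Mblk n Φ γ)ᵀ) X (0, j) t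
  simp only [mulVecAT0, neg_neg] at h
  exact h

lemma hY1 (hsym : ∀ a b, Φ a b = Φ b a) (j : Fin n) (t : ℝ) :
    HasDerivAt (fun t => Yf Φ γ X t (1, j))
      (-((∑ k, Φ j k * Yf Φ γ X t (0, k)) + γ * Yf Φ γ X t (1, j))) t := by
  have h := hasDerivAt_Y ((Mblk n Φ γ)ᵀ) X (1, j) t
  rw [mulVecAT1] at h
  have e : (∑ k, Φ j k * Yf Φ γ X t (0, k)) = ∑ k, Φ k j * Yf Φ γ X t (0, k) :=
    Finset.sum_congr rfl fun k _ => by rw [hsym]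
  rw [e]
  exact h

lemma contY (c : Fin 2 × Fin n) : Continuous (fun t => Yf Φ γ X t c) :=
  continuous_iff_continuousAt.2 fun t => (hasDerivAt_Y ((Mblk n Φ γ)ᵀ) X c t).continuousAt

lemma hH (hsym : ∀ a b, Φ a b = Φ b a) (t : ℝ) :
    HasDerivAt (HF Φ γ X) (-γ * NpF Φ γ X t) t := by
  set p : Fin n → ℝ := fun j => Yf Φ γ X t (1, j) with hp
  set q : Fin n → ℝ := fun j => Yf Φ γ X t (0, j) with hq
  set S : Fin n → ℝ := fun j => ∑ k, Φ j k * q k with hS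
  have hNp : HasDerivAt (fun t => ∑ j, Yf Φ γ X t (1, j) ^ 2)
      (∑ j, ((2:ℕ) : ℝ) * p j ^ 1 * (-((∑ k, Φ j k * q k) + γ * p j))) t := by
    apply HasDerivAt.fun_sum
    intro j _
    exact (hY1 Φ γ X hsym j t).pow 2
  have hEF : HasDerivAt (fun t => ∑ j, ∑ k, Yf Φ γ X t (0, j) * Φ j k * Yf Φ γ X t (0, k))
      (∑ j, ∑ k, ((p j * Φ j k) * q k + (q j * Φ j k) * p k)) t := by
    apply HasDerivAt.fun_sum; intro j _
    apply HasDerivAt.fun_sum; intro k _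
    exact ((hY0 Φ γ X j t).mul_const (Φ j k)).mul (hY0 Φ γ X k t)
  have hraw := (hNp.div_const 2).add (hEF.div_const 2)
  have key : ∑ j, ∑ k, (q j * Φ j k) * p k = ∑ j, p j * S j := by
    rw [Finset.sum_comm]
    refine Finset.sum_congr rfl fun a _ => ?_
    rw [hS, Finset.mul_sum]
    refine Finset.sum_congr rfl fun b _ => by rw [hsym]; ring
  have h2 : ∑ j, ∑ k, (p j * Φ j k) * q k = ∑ j, p j * S j := by
    refine Finset.sum_congr rfl fun j _ => ?_
    rw [hS, Finset.mul_sum]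
    exact Finset.sum_congr rfl fun k _ => by ring
  have h1 : ∑ j, ∑ k, ((p j * Φ j k) * q k + (q j * Φ j k) * p k)
      = 2 * ∑ j, p j * S j := by
    simp only [Finset.sum_add_distrib]
    rw [key, h2]; ring
  have h3 : ∑ j, ((2:ℕ) : ℝ) * p j ^ 1 * (-((∑ k, Φ j k * q k) + γ * p j))
      = (-2) * (∑ j, p j * S j) + (-(2*γ)) * ∑ j, p j ^ 2 := by
    rw [Finset.mul_sum, Finset.mul_sum, ← Finset.sum_add_distrib]
    refine Finset.sum_congr rfl fun j _ => ?_
    rw [hS]; push_cast; ring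
  have hfun : HF Φ γ X = fun t => (∑ j, Yf Φ γ X t (1, j) ^ 2) / 2
      + (∑ j, ∑ k, Yf Φ γ X t (0, j) * Φ j k * Yf Φ γ X t (0, k)) / 2 := by
    funext u; rfl
  rw [hfun]
  refine hraw.congr_deriv (Eq.symm ?_)
  rw [h3, h1, NpF]
  ring

lemma hCr (hsym : ∀ a b, Φ a b = Φ b a) (t : ℝ) :
    HasDerivAt (CrF Φ γ X) (NpF Φ γ X t - EF Φ γ X t - γ * CrF Φ γ X t) t := by
  set p : Fin n → ℝ := fun j => Yf Φ γ X t (1, j) with hp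
  set q : Fin n → ℝ := fun j => Yf Φ γ X t (0, j) with hq
  set S : Fin n → ℝ := fun j => ∑ k, Φ j k * q k with hS
  have hraw : HasDerivAt (CrF Φ γ X)
      (∑ j, (p j * p j + q j * (-((∑ k, Φ j k * q k) + γ * p j)))) t := by
    apply HasDerivAt.fun_sum
    intro j _
    exact (hY0 Φ γ X j t).mul (hY1 Φ γ X hsym j t)
  refine hraw.congr_deriv (Eq.symm ?_)
  have hEq : EF Φ γ X t = ∑ j, q j * S j := by
    refine Finset.sum_congr rfl fun j _ => ?_
    rw [hS, Finset.mul_sum]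
    exact Finset.sum_congr rfl fun k _ => by ring
  have h3 : ∑ j, (p j * p j + q j * (-((∑ k, Φ j k * q k) + γ * p j)))
      = (∑ j, p j ^ 2) + (-1) * (∑ j, q j * S j) + (-γ) * ∑ j, q j * p j := by
    rw [Finset.mul_sum, Finset.mul_sum, ← Finset.sum_add_distrib, ← Finset.sum_add_distrib]
    refine Finset.sum_congr rfl fun j _ => ?_
    rw [hS]; ring
  rw [h3, ← hEq, NpF, CrF]
  ring

lemma quad_abs {n : ℕ} (Φ : Matrix (Fin n) (Fin n) ℝ) (v : Fin n → ℝ) :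
    |∑ j, ∑ k, v j * Φ j k * v k| ≤ (∑ j, ∑ k, |Φ j k|) * ∑ j, v j ^ 2 := by
  calc |∑ j, ∑ k, v j * Φ j k * v k| ≤ ∑ j, |∑ k, v j * Φ j k * v k| :=
        Finset.abs_sum_le_sum_abs _ _
    _ ≤ ∑ j, ∑ k, |v j * Φ j k * v k| :=
        Finset.sum_le_sum fun j _ => Finset.abs_sum_le_sum_abs _ _
    _ ≤ ∑ j, ∑ k, |Φ j k| * ∑ i, v i ^ 2 := by
        refine Finset.sum_le_sum fun j _ => Finset.sum_le_sum fun k _ => ?_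
        have h1 : |v j * Φ j k * v k| = |Φ j k| * (|v j| * |v k|) := by
          rw [abs_mul, abs_mul]; ring
        rw [h1]
        apply mul_le_mul_of_nonneg_left _ (abs_nonneg _)
        have h2 : |v j| * |v k| ≤ (v j ^ 2 + v k ^ 2) / 2 := by
          nlinarith [sq_nonneg (|v j| - |v k|), sq_abs (v j), sq_abs (v k)]
        have h3 : v j ^ 2 ≤ ∑ i, v i ^ 2 :=
          Finset.single_le_sum (fun i _ => sq_nonneg (v i)) (Finset.mem_univ j)
        have h4 : v k ^ 2 ≤ ∑ i, v i ^ 2 :=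
          Finset.single_le_sum (fun i _ => sq_nonneg (v i)) (Finset.mem_univ k)
        linarith
    _ = (∑ j, ∑ k, |Φ j k|) * ∑ j, v j ^ 2 := by
        rw [Finset.sum_mul]
        exact Finset.sum_congr rfl fun j _ => by rw [Finset.sum_mul]

def GF (ε : ℝ) (t : ℝ) : ℝ := HF Φ γ X t + ε * CrF Φ γ X t

lemma decay_facts (t : ℝ) {m : ℝ} (hm : 0 < m)
    (hq : ∀ v : Fin n → ℝ, m * ∑ j, v j ^ 2 ≤ ∑ j, ∑ k, v j * Φ j k * v k) :
    0 ≤ NpF Φ γ X t ∧ 0 ≤ NqF Φ γ X t ∧ m * NqF Φ γ X t ≤ EF Φ γ X t ∧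
      CrF Φ γ X t ^ 2 ≤ NpF Φ γ X t * NqF Φ γ X t := by
  refine ⟨Finset.sum_nonneg fun j _ => sq_nonneg _, Finset.sum_nonneg fun j _ => sq_nonneg _,
    hq _, ?_⟩
  have h := Finset.sum_mul_sq_le_sq_mul_sq Finset.univ
    (fun j => Yf Φ γ X t (0, j)) (fun j => Yf Φ γ X t (1, j))
  calc CrF Φ γ X t ^ 2 ≤ NqF Φ γ X t * NpF Φ γ X t := h
    _ = NpF Φ γ X t * NqF Φ γ X t := mul_comm _ _

lemma gronwall (hsym : ∀ a b, Φ a b = Φ b a) {m : ℝ} (hm : 0 < m)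
    (hq : ∀ v : Fin n → ℝ, m * ∑ j, v j ^ 2 ≤ ∑ j, ∑ k, v j * Φ j k * v k)
    (hγpos : 0 < γ) {ε : ℝ} (hε : 0 < ε) (hε1 : ε * γ^2 + 4*ε*m = γ*m) :
    ∀ t, 0 ≤ t → GF Φ γ X ε t ≤ GF Φ γ X ε 0 * exp (-(ε*t)) := by
  have hexp : ∀ t : ℝ, HasDerivAt (fun t => exp (ε*t)) (exp (ε*t) * ε) t := by
    intro t
    have h1 := (Real.hasDerivAt_exp (ε*t)).comp t ((hasDerivAt_id t).const_mul ε)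
    simp at h1; exact h1
  have hG : ∀ t, HasDerivAt (GF Φ γ X ε)
      (-γ * NpF Φ γ X t + ε * (NpF Φ γ X t - EF Φ γ X t - γ * CrF Φ γ X t)) t :=
    fun t => (hH Φ γ X hsym t).add ((hCr Φ γ X hsym t).const_mul ε)
  set u : ℝ → ℝ := fun t => GF Φ γ X ε t * exp (ε*t) with hu
  have hud : ∀ t, HasDerivAt u
      ((-γ * NpF Φ γ X t + ε * (NpF Φ γ X t - EF Φ γ X t - γ * CrF Φ γ X t)) * exp (ε*t)
        + GF Φ γ X ε t * (exp (ε*t) * ε)) t := fun t => (hG t).mul (hexp t)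
  have hne : ∀ t, ((-γ * NpF Φ γ X t + ε * (NpF Φ γ X t - EF Φ γ X t - γ * CrF Φ γ X t)) * exp (ε*t)
        + GF Φ γ X ε t * (exp (ε*t) * ε)) ≤ 0 := by
    intro t
    obtain ⟨h1, h2, h3, h4⟩ := decay_facts Φ γ X t hm hq
    have hk := key_ineq hm hγpos hε hε1 h1 h2 h3 h4
    have hGe : GF Φ γ X ε t = NpF Φ γ X t / 2 + EF Φ γ X t / 2 + ε * CrF Φ γ X t := by
      rw [GF, HF]
    have : (-γ * NpF Φ γ X t + ε * (NpF Φ γ X t - EF Φ γ X t - γ * CrF Φ γ X t))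
        + GF Φ γ X ε t * ε ≤ 0 := by rw [hGe]; nlinarith [hk]
    nlinarith [exp_pos (ε*t), this, mul_le_mul_of_nonneg_right this (exp_pos (ε*t)).le]
  have hant : Antitone u := by
    apply antitone_of_deriv_nonpos
    · exact fun t => (hud t).differentiableAt
    · intro t; rw [(hud t).deriv]; exact hne t
  intro t ht
  have h1 : u t ≤ u 0 := hant ht
  have h2 : u 0 = GF Φ γ X ε 0 := by simp [hu]
  rw [h2] at h1
  have h3 := mul_le_mul_of_nonneg_right h1 (exp_pos (-(ε*t))).le
  calc GF Φ γ X ε t = GF Φ γ X ε t * exp (ε*t) * exp (-(ε*t)) := by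
        rw [mul_assoc, ← Real.exp_add]; simp
    _ ≤ GF Φ γ X ε 0 * exp (-(ε*t)) := h3

lemma decay (hsym : ∀ a b, Φ a b = Φ b a) {m : ℝ} (hm : 0 < m)
    (hq : ∀ v : Fin n → ℝ, m * ∑ j, v j ^ 2 ≤ ∑ j, ∑ k, v j * Φ j k * v k)
    (hγpos : 0 < γ) {ε : ℝ} (hε : 0 < ε) (hε1 : ε * γ^2 + 4*ε*m = γ*m) :
    ∃ C : ℝ, 0 ≤ C ∧ ∀ t, 0 ≤ t →
      NpF Φ γ X t + NqF Φ γ X t ≤ C * exp (-(ε*t)) := by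
  have hlow : ∀ t, NpF Φ γ X t / 4 + m/4 * NqF Φ γ X t ≤ GF Φ γ X ε t := by
    intro t
    obtain ⟨h1, h2, h3, h4⟩ := decay_facts Φ γ X t hm hq
    have := lower_ineq hm hγpos hε hε1 h1 h2 h3 h4
    have hGe : GF Φ γ X ε t = NpF Φ γ X t / 2 + EF Φ γ X t / 2 + ε * CrF Φ γ X t := by
      rw [GF, HF]
    rw [hGe]; linarith
  have hG0 : 0 ≤ GF Φ γ X ε 0 := by
    obtain ⟨h1, h2, -, -⟩ := decay_facts Φ γ X 0 hm hq
    have := hlow 0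
    nlinarith
  refine ⟨(4 + 4/m) * GF Φ γ X ε 0, by positivity, ?_⟩
  intro t ht
  obtain ⟨h1, h2, -, -⟩ := decay_facts Φ γ X t hm hq
  have hg := gronwall Φ γ X hsym hm hq hγpos hε hε1 t ht
  have hl := hlow t
  have hNp4 : NpF Φ γ X t ≤ 4 * GF Φ γ X ε t := by nlinarith
  have hNq4 : NqF Φ γ X t ≤ 4/m * GF Φ γ X ε t := by
    rw [div_mul_eq_mul_div, le_div_iff₀ hm]; nlinarith
  have hGnn : 0 ≤ GF Φ γ X ε t := by nlinarith
  calc NpF Φ γ X t + NqF Φ γ X t ≤ (4 + 4/m) * GF Φ γ X ε t := by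
        rw [add_mul]; exact add_le_add hNp4 hNq4
    _ ≤ (4 + 4/m) * (GF Φ γ X ε 0 * exp (-(ε*t))) := by
        apply mul_le_mul_of_nonneg_left hg (by positivity)
    _ = (4 + 4/m) * GF Φ γ X ε 0 * exp (-(ε*t)) := by ring

lemma Yf_zero : Yf Φ γ X 0 = X := by
  rw [Yf]
  norm_num [NormedSpace.exp_zero]

lemma comp_sq_le (t : ℝ) (c : Fin 2 × Fin n) :
    Yf Φ γ X t c ^ 2 ≤ NpF Φ γ X t + NqF Φ γ X t := by
  obtain ⟨i, j⟩ := c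
  have h1 : 0 ≤ NpF Φ γ X t := Finset.sum_nonneg fun j _ => sq_nonneg _
  have h2 : 0 ≤ NqF Φ γ X t := Finset.sum_nonneg fun j _ => sq_nonneg _
  fin_cases i
  · have : Yf Φ γ X t (0, j) ^ 2 ≤ NqF Φ γ X t :=
      Finset.single_le_sum (fun k _ => sq_nonneg (Yf Φ γ X t (0, k))) (Finset.mem_univ j)
    simpa using by linarith
  · have : Yf Φ γ X t (1, j) ^ 2 ≤ NpF Φ γ X t :=
      Finset.single_le_sum (fun k _ => sq_nonneg (Yf Φ γ X t (1, k))) (Finset.mem_univ j)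
    simpa using by linarith

end evo

lemma exp_entry_bound {n : ℕ} (Φ : Matrix (Fin n) (Fin n) ℝ) (γ : ℝ)
    (hsym : ∀ a b, Φ a b = Φ b a) {m : ℝ} (hm : 0 < m)
    (hq : ∀ v : Fin n → ℝ, m * ∑ j, v j ^ 2 ≤ ∑ j, ∑ k, v j * Φ j k * v k)
    (hγpos : 0 < γ) {ε : ℝ} (hε : 0 < ε) (hε1 : ε * γ^2 + 4*ε*m = γ*m) :
    ∃ K : ℝ, 0 ≤ K ∧ ∀ t, 0 ≤ t → ∀ c c' : Fin 2 × Fin n,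
      (NormedSpace.exp ((-t) • (Mblk n Φ γ)ᵀ) c c') ^ 2 ≤ K * exp (-(ε*t)) := by
  choose Cf hCf0 hCf using fun c' : Fin 2 × Fin n =>
    decay Φ γ (Pi.single c' 1) hsym hm hq hγpos hε hε1
  refine ⟨∑ c', Cf c', Finset.sum_nonneg fun c' _ => hCf0 c', ?_⟩
  intro t ht c c'
  have h1 : NormedSpace.exp ((-t) • (Mblk n Φ γ)ᵀ) c c' = Yf Φ γ (Pi.single c' 1) t c := by
    rw [Yf, Matrix.mulVec_single]; simp
  rw [h1]
  calc Yf Φ γ (Pi.single c' 1) t c ^ 2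
      ≤ NpF Φ γ (Pi.single c' 1) t + NqF Φ γ (Pi.single c' 1) t :=
        comp_sq_le Φ γ (Pi.single c' 1) t c
    _ ≤ Cf c' * exp (-(ε*t)) := hCf c' t ht
    _ ≤ (∑ c'', Cf c'') * exp (-(ε*t)) := by
        apply mul_le_mul_of_nonneg_right _ (exp_pos _).le
        exact Finset.single_le_sum (fun c'' _ => hCf0 c'') (Finset.mem_univ c')



theorem lyap (n : ℕ) (Φ : Matrix (Fin n) (Fin n) ℝ) (hΦ : Φ.IsSymm)
    (γ : ℝ) (hγ : γ ≠ 0) :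
    Mblk n Φ γ * Qblk n Φ γ + Qblk n Φ γ * (Mblk n Φ γ)ᵀ = Pblk n := by
  ext ⟨i, j⟩ ⟨k, l⟩
  have hsym : ∀ a b, Φ a b = Φ b a := fun a b => hΦ.apply b a
  simp only [Matrix.add_apply, Matrix.mul_apply, Matrix.transpose_apply, Fintype.sum_prod_type,
    Mblk, Pblk, Qblk, Fin.sum_univ_two]
  fin_cases i <;> fin_cases k <;>
    simp [Finset.mul_sum, Finset.sum_ite_eq, Finset.sum_ite_eq', mul_comm, mul_assoc, mul_left_comm] <;>
    field_simp <;>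
    try ring_nf
  all_goals first
    | (rw [hsym j l]; ring)
    | (rcases eq_or_ne j l with h | h
       · subst h; simp [mul_inv_cancel₀ hγ]; norm_num
       · simp [h, h.symm])


/-- `Q` solves the Lyapunov equation `MQ + QMᵀ = P⁽²⁾`; for positive
definite `Φ` and `γ > 0` it equals `∫₀^∞ e^{−tM} P⁽²⁾ e^{−tMᵀ} dt`, and consequently
`∫₀^∞ |(e^{−tMᵀ}X)₂|² dt = H(X)/γ` for every `X ∈ ℝ^{2n}`. -/
theorem stmt18 (n : ℕ) (hn : 1 ≤ n) (Φ : Matrix (Fin n) (Fin n) ℝ) (hΦ : Φ.IsSymm)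
    (γ : ℝ) (hγ : γ ≠ 0) :
    Mblk n Φ γ * Qblk n Φ γ + Qblk n Φ γ * (Mblk n Φ γ)ᵀ = Pblk n ∧
    (Φ.PosDef → 0 < γ →
      (∀ p q : Fin 2 × Fin n,
        Qblk n Φ γ p q = ∫ t in Set.Ioi (0:ℝ),
          (NormedSpace.exp ((-t) • Mblk n Φ γ) * Pblk n *
            NormedSpace.exp ((-t) • (Mblk n Φ γ)ᵀ)) p q) ∧
      ∀ X : Fin 2 × Fin n → ℝ,
        (∫ t in Set.Ioi (0:ℝ), ∑ j : Fin n,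
            ((NormedSpace.exp ((-t) • (Mblk n Φ γ)ᵀ)).mulVec X (1, j)) ^ 2) =
          1 / γ * (1 / 2 * ((∑ j : Fin n, X (1, j) ^ 2) +
            ∑ j : Fin n, ∑ j' : Fin n, X (0, j) * Φ j j' * X (0, j')))) := by

  have hsym : ∀ a b, Φ a b = Φ b a := fun a b => hΦ.apply b a
  have hlyap := lyap n Φ hΦ γ hγ
  refine ⟨hlyap, ?_⟩
  intro hpd hγpos
  obtain ⟨m, hm, hq⟩ := posdef_bound hn Φ hpd
  obtain ⟨ε, hε, hε1⟩ := eps_props hm hγpos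
  obtain ⟨K, hK0, hK⟩ := exp_entry_bound Φ γ hsym hm hq hγpos hε hε1
  set A := Mblk n Φ γ with hA
  have hexpT : ∀ t : ℝ, ∀ c c' : Fin 2 × Fin n,
      NormedSpace.exp ((-t) • Aᵀ) c' c = NormedSpace.exp ((-t) • A) c c' := by
    intro t c c'
    rw [← Matrix.transpose_smul, Matrix.exp_transpose]
    rfl
  have hexpint : IntegrableOn (fun t => exp (-(ε*t))) (Set.Ioi (0:ℝ)) := by
    simpa [neg_mul] using exp_neg_integrableOn_Ioi 0 hε
  have htend0 : Filter.Tendsto (fun t => exp (-(ε*t))) Filter.atTop (nhds 0) := by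
    have h1 : Filter.Tendsto (fun t : ℝ => ε * t) Filter.atTop Filter.atTop :=
      Filter.Tendsto.const_mul_atTop hε tendsto_id
    exact Real.tendsto_exp_neg_atTop_nhds_zero.comp h1
  constructor
  · -- part (b)
    intro p q
    have hbound : ∀ B : Matrix (Fin 2 × Fin n) (Fin 2 × Fin n) ℝ, ∀ t : ℝ, 0 ≤ t →
        |(NormedSpace.exp ((-t) • A) * B * NormedSpace.exp ((-t) • Aᵀ)) p q|
          ≤ ((∑ c, ∑ d, |B c d|) * K) * exp (-(ε*t)) := by
      intro B t ht
      have e : (NormedSpace.exp ((-t) • A) * B * NormedSpace.exp ((-t) • Aᵀ)) p q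
          = ∑ d, ∑ c, (NormedSpace.exp ((-t) • A) p c * B c d) * NormedSpace.exp ((-t) • Aᵀ) d q := by
        simp [Matrix.mul_apply, Finset.sum_mul]
      rw [e]
      have hterm : ∀ c d : Fin 2 × Fin n,
          |(NormedSpace.exp ((-t) • A) p c * B c d) * NormedSpace.exp ((-t) • Aᵀ) d q|
            ≤ |B c d| * (K * exp (-(ε*t))) := by
        intro c d
        set a := NormedSpace.exp ((-t) • A) p c with ha'
        set b := NormedSpace.exp ((-t) • Aᵀ) d q with hb'
        have ha : a ^ 2 ≤ K * exp (-(ε*t)) := by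
          rw [ha', ← hexpT t p c]; exact hK t ht c p
        have hb : b ^ 2 ≤ K * exp (-(ε*t)) := hK t ht d q
        have habs : |a * B c d * b| = |B c d| * (|a| * |b|) := by
          rw [abs_mul, abs_mul]; ring
        rw [habs]
        apply mul_le_mul_of_nonneg_left _ (abs_nonneg _)
        nlinarith [sq_nonneg (|a| - |b|), sq_abs a, sq_abs b, abs_nonneg a, abs_nonneg b]
      calc |∑ d, ∑ c, (NormedSpace.exp ((-t) • A) p c * B c d) * NormedSpace.exp ((-t) • Aᵀ) d q|
          ≤ ∑ d, |∑ c, (NormedSpace.exp ((-t) • A) p c * B c d) * NormedSpace.exp ((-t) • Aᵀ) d q| :=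
            Finset.abs_sum_le_sum_abs _ _
        _ ≤ ∑ d, ∑ c, |(NormedSpace.exp ((-t) • A) p c * B c d) * NormedSpace.exp ((-t) • Aᵀ) d q| :=
            Finset.sum_le_sum fun d _ => Finset.abs_sum_le_sum_abs _ _
        _ ≤ ∑ d : Fin 2 × Fin n, ∑ c : Fin 2 × Fin n, |B c d| * (K * exp (-(ε*t))) :=
            Finset.sum_le_sum fun d _ => Finset.sum_le_sum fun c _ => hterm c d
        _ = ((∑ c, ∑ d, |B c d|) * K) * exp (-(ε*t)) := by
            rw [show ((∑ c, ∑ d, |B c d|) * K) * exp (-(ε*t))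
                = (∑ d, ∑ c, |B c d|) * (K * exp (-(ε*t))) by rw [Finset.sum_comm]; ring]
            rw [Finset.sum_mul]
            exact Finset.sum_congr rfl fun d _ => by rw [Finset.sum_mul]
    have hder : ∀ t : ℝ, HasDerivAt
        (fun t => -((NormedSpace.exp ((-t) • A) * Qblk n Φ γ * NormedSpace.exp ((-t) • Aᵀ)) p q))
        ((NormedSpace.exp ((-t) • A) * Pblk n * NormedSpace.exp ((-t) • Aᵀ)) p q) t := by
      intro t
      have h := hasDerivAt_F A (Qblk n Φ γ) t
      rw [hlyap] at h
      have h2 := ((entCLM p q).hasFDerivAt.comp_hasDerivAt t h).neg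
      refine h2.congr_deriv ?_
      change -((-(NormedSpace.exp ((-t) • A) * Pblk n * NormedSpace.exp ((-t) • Aᵀ))) p q) = _
      simp
    have hcont : ∀ B : Matrix (Fin 2 × Fin n) (Fin 2 × Fin n) ℝ,
        Continuous (fun t : ℝ => (NormedSpace.exp ((-t) • A) * B * NormedSpace.exp ((-t) • Aᵀ)) p q) := by
      intro B
      have h : Continuous (fun t : ℝ => NormedSpace.exp ((-t) • A) * B * NormedSpace.exp ((-t) • Aᵀ)) :=
        ((continuous_expM A).mul (continuous_const : Continuous fun _ : ℝ => B)).mul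
          (continuous_expM Aᵀ)
      exact (entCLM p q).continuous.comp h
    have hint : IntegrableOn
        (fun t : ℝ => (NormedSpace.exp ((-t) • A) * Pblk n * NormedSpace.exp ((-t) • Aᵀ)) p q) (Set.Ioi 0) := by
      apply Integrable.mono' (hexpint.const_mul ((∑ c, ∑ d, |Pblk n c d|) * K))
      · exact (hcont (Pblk n)).aestronglyMeasurable
      · filter_upwards [ae_restrict_mem measurableSet_Ioi] with t ht
        rw [Real.norm_eq_abs]
        exact hbound (Pblk n) t ht.le
    have htendQ : Filter.Tendsto
        (fun t : ℝ => -((NormedSpace.exp ((-t) • A) * Qblk n Φ γ * NormedSpace.exp ((-t) • Aᵀ)) p q))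
        Filter.atTop (nhds 0) := by
      have hb1 : ∀ᶠ t in Filter.atTop,
          ‖-((NormedSpace.exp ((-t) • A) * Qblk n Φ γ * NormedSpace.exp ((-t) • Aᵀ)) p q)‖
            ≤ ((∑ c, ∑ d, |Qblk n Φ γ c d|) * K) * exp (-(ε*t)) := by
        filter_upwards [Filter.eventually_ge_atTop 0] with t ht
        rw [norm_neg, Real.norm_eq_abs]
        exact hbound (Qblk n Φ γ) t ht
      have hb2 : Filter.Tendsto (fun t => ((∑ c, ∑ d, |Qblk n Φ γ c d|) * K) * exp (-(ε*t)))
          Filter.atTop (nhds 0) := by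
        simpa using htend0.const_mul ((∑ c, ∑ d, |Qblk n Φ γ c d|) * K)
      exact squeeze_zero_norm' hb1 hb2
    have heval := integral_Ioi_of_hasDerivAt_of_tendsto' (fun x _ => hder x) hint htendQ
    have hf0 : -((NormedSpace.exp ((-(0:ℝ)) • A) * Qblk n Φ γ * NormedSpace.exp ((-(0:ℝ)) • Aᵀ)) p q)
        = -(Qblk n Φ γ p q) := by
      norm_num [NormedSpace.exp_zero]
    rw [hf0] at heval
    rw [heval]
    ring
  · -- part (c)
    intro X
    obtain ⟨CX, hCX0, hCX⟩ := decay Φ γ X hsym hm hq hγpos hε hε1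
    have hNpnn : ∀ t, 0 ≤ NpF Φ γ X t := fun t => Finset.sum_nonneg fun j _ => sq_nonneg _
    have hNqnn : ∀ t, 0 ≤ NqF Φ γ X t := fun t => Finset.sum_nonneg fun j _ => sq_nonneg _
    have hNpcont : Continuous (NpF Φ γ X) := by
      apply continuous_finset_sum
      intro j _
      exact (contY Φ γ X (1, j)).pow 2
    have hder : ∀ t : ℝ, HasDerivAt (fun t => -(HF Φ γ X t)) (γ * NpF Φ γ X t) t := by
      intro t
      have h := (hH Φ γ X hsym t).neg
      simp at h; exact h
    have hint : IntegrableOn (fun t => γ * NpF Φ γ X t) (Set.Ioi 0) := by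
      apply Integrable.mono' (hexpint.const_mul (γ * CX))
      · exact (continuous_const.mul hNpcont).aestronglyMeasurable
      · filter_upwards [ae_restrict_mem measurableSet_Ioi] with t ht
        rw [Real.norm_eq_abs, abs_of_nonneg (mul_nonneg hγpos.le (hNpnn t))]
        have h1 := hCX t ht.le
        have h2 := hNqnn t
        rw [mul_assoc]
        apply mul_le_mul_of_nonneg_left _ hγpos.le
        linarith
    set KΦ : ℝ := ∑ j, ∑ k, |Φ j k| with hKΦ
    have hKΦ0 : 0 ≤ KΦ :=
      Finset.sum_nonneg fun j _ => Finset.sum_nonneg fun k _ => abs_nonneg _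
    have htendH : Filter.Tendsto (fun t => -(HF Φ γ X t)) Filter.atTop (nhds 0) := by
      have hb1 : ∀ᶠ t in Filter.atTop, ‖-(HF Φ γ X t)‖ ≤ ((1 + KΦ)/2 * CX) * exp (-(ε*t)) := by
        filter_upwards [Filter.eventually_ge_atTop 0] with t ht
        rw [norm_neg, Real.norm_eq_abs]
        have hE : |EF Φ γ X t| ≤ KΦ * NqF Φ γ X t := by
          simpa [EF, NqF] using quad_abs Φ (fun j => Yf Φ γ X t (0, j))
        have h1 := hCX t ht
        have habs : |HF Φ γ X t| ≤ NpF Φ γ X t / 2 + |EF Φ γ X t| / 2 := by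
          rw [HF]
          calc |NpF Φ γ X t / 2 + EF Φ γ X t / 2|
              ≤ |NpF Φ γ X t / 2| + |EF Φ γ X t / 2| := abs_add_le _ _
            _ = NpF Φ γ X t / 2 + |EF Φ γ X t| / 2 := by
                rw [abs_div, abs_div, abs_of_nonneg (hNpnn t)]
                norm_num
        have h2 : |HF Φ γ X t| ≤ (1 + KΦ)/2 * (NpF Φ γ X t + NqF Φ γ X t) := by
          nlinarith [hNpnn t, hNqnn t]
        calc |HF Φ γ X t| ≤ (1 + KΦ)/2 * (NpF Φ γ X t + NqF Φ γ X t) := h2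
          _ ≤ (1 + KΦ)/2 * (CX * exp (-(ε*t))) := by
              apply mul_le_mul_of_nonneg_left h1 (by positivity)
          _ = ((1 + KΦ)/2 * CX) * exp (-(ε*t)) := by ring
      have hb2 : Filter.Tendsto (fun t => ((1 + KΦ)/2 * CX) * exp (-(ε*t)))
          Filter.atTop (nhds 0) := by
        simpa using htend0.const_mul ((1 + KΦ)/2 * CX)
      exact squeeze_zero_norm' hb1 hb2
    have heval := integral_Ioi_of_hasDerivAt_of_tendsto' (fun x _ => hder x) hint htendH
    have hH0 : HF Φ γ X 0 = 1/2 * ((∑ j, X (1, j) ^ 2)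
        + ∑ j, ∑ k, X (0, j) * Φ j k * X (0, k)) := by
      simp only [HF, NpF, EF, Yf_zero]
      ring
    have hmul : ∫ t in Set.Ioi (0:ℝ), γ * NpF Φ γ X t
        = γ * ∫ t in Set.Ioi (0:ℝ), NpF Φ γ X t := integral_const_mul γ _
    rw [hmul] at heval
    show (∫ t in Set.Ioi (0:ℝ), NpF Φ γ X t) = _
    rw [← hH0]
    have : HF Φ γ X 0 = γ * ∫ t in Set.Ioi (0:ℝ), NpF Φ γ X t := by
      rw [heval]; ring
    rw [this]
    field_simp
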